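/- Characterization of k-positivity (Terhal–Horodecki): let Λ be a linear map on d×d complex matrices that preserves Hermitian adjoints (Λ(X†) = Λ(X)† for all X), and let 1 ≤ k ≤ d. Then Λ is k-positive — i.e. (1_k⊗Λ)(M) is positive semidefinite for every positive semidefinite matrix M indexed by Fin k × Fin d — if and only if Re⟨φ, (1⊗Λ)(P₊)·φ⟩ ≥ 0 for every vector φ : Fin d × Fin d → ℂ of Schmidt rank at most k. -/

import Mathlib

open Matrix Kronecker BigOperators
open scoped ComplexOrder

noncomputable section

/-- `d × d` complex matrices. -/
abbrev Mat (d : ℕ) := Matrix (Fin d) (Fin d) ℂ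

/-- Matrices on `ℂ^d ⊗ ℂ^d`, indexed by `Fin d × Fin d`. -/
abbrev Mat2 (d : ℕ) := Matrix (Fin d × Fin d) (Fin d × Fin d) ℂ

/-- Partial transpose on Bob's system: `(M^{T_B})_{(i,k),(j,l)} = M_{(i,l),(j,k)}`. -/
def ptB {d : ℕ} (M : Mat2 d) : Mat2 d :=
  Matrix.of fun p q => M (p.1, q.2) (q.1, p.2)

/-- Schmidt rank of a vector `ψ : Fin d × Fin d → ℂ`: the rank of the `d × d`
matrix with `(i,j)` entry `ψ (i,j)`. -/
def schmidtRank {d : ℕ} (ψ : Fin d × Fin d → ℂ) : ℕ :=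
  (Matrix.of fun i j => ψ (i, j) : Mat d).rank

/-- A state: positive semidefinite with trace one. -/
def IsState {d : ℕ} (ρ : Mat2 d) : Prop := ρ.PosSemidef ∧ ρ.trace = 1

/-- One-distillability: some Schmidt-rank-≤2 vector has negative expectation on `ρ^{T_B}`. -/
def OneDistillable {d : ℕ} (ρ : Mat2 d) : Prop :=
  ∃ ψ : Fin d × Fin d → ℂ, schmidtRank ψ ≤ 2 ∧
    (star ψ ⬝ᵥ (ptB ρ).mulVec ψ).re < 0

/-- The rank-one matrix `|ψ⟩⟨ψ|`, with entries `ψ x * conj (ψ y)`. -/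
def outer {d : ℕ} (ψ : Fin d × Fin d → ℂ) : Mat2 d :=
  Matrix.vecMulVec ψ (star ψ)

/-- The maximally entangled projector `P₊`, `(P₊)_{(i,k),(j,l)} = (1/d)·δ_{ik}·δ_{jl}`. -/
def Pplus (d : ℕ) : Mat2 d :=
  Matrix.of fun p q =>
    ((if p.1 = p.2 then (1 : ℂ) else 0) * (if q.1 = q.2 then (1 : ℂ) else 0)) / d

/-- The flip operator `V_{(i,k),(j,l)} = δ_{il}·δ_{jk}`. -/
def flipOp (d : ℕ) : Mat2 d :=
  Matrix.of fun p q => if p.1 = q.2 ∧ q.1 = p.2 then (1 : ℂ) else 0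

/-- The operator `Z = Σ_i |ii⟩⟨ii|`, `Z_{(i,k),(j,l)} = δ_{ik}·δ_{jl}·δ_{ij}`. -/
def Zop (d : ℕ) : Mat2 d :=
  Matrix.of fun p q => if p.1 = p.2 ∧ q.1 = q.2 ∧ p.1 = q.1 then (1 : ℂ) else 0

/-- Partial trace over Alice: `(Tr_A M)_{k,l} = Σ_i M_{(i,k),(i,l)}`. -/
def trA {d : ℕ} (M : Mat2 d) : Mat d :=
  Matrix.of fun k l => ∑ i, M (i, k) (i, l)

/-- Alice's reduced state: `(ρ_A)_{i,j} = Σ_k ρ_{(i,k),(j,k)}`. -/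
def redA {d : ℕ} (ρ : Mat2 d) : Mat d :=
  Matrix.of fun i j => ∑ k, ρ (i, k) (j, k)

/-- Bob's reduced state: `(ρ_B)_{k,l} = Σ_i ρ_{(i,k),(i,l)}`. -/
def redB {d : ℕ} (ρ : Mat2 d) : Mat d := trA ρ

/-- `(1 ⊗ Λ)(M)`, acting with `Λ` on Bob's blocks. -/
def idTensor {d : ℕ} (Λ : Mat d → Mat d) (M : Mat2 d) : Mat2 d :=
  Matrix.of fun p q => Λ (Matrix.of fun k l => M (p.1, k) (q.1, l)) p.2 q.2

/-- `(Λ ⊗ 1)(M)`, acting with `Λ` on Alice's blocks. -/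
def tensorId {d : ℕ} (Λ : Mat d → Mat d) (M : Mat2 d) : Mat2 d :=
  Matrix.of fun p q => Λ (Matrix.of fun i j => M (i, p.2) (j, q.2)) p.1 q.1

/-- `(1_k ⊗ Λ)(M)` for `M` indexed by `Fin k × Fin d`. -/
def idTensorK {d : ℕ} (k : ℕ) (Λ : Mat d → Mat d)
    (M : Matrix (Fin k × Fin d) (Fin k × Fin d) ℂ) :
    Matrix (Fin k × Fin d) (Fin k × Fin d) ℂ :=
  Matrix.of fun p q => Λ (Matrix.of fun m n => M (p.1, m) (q.1, n)) p.2 q.2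

/-- Two-decomposable maps: `Λ(X) = Σᵢ Vᵢ · Xᵀ · Vᵢ†` with each `Vᵢ` of rank at most 2. -/
def TwoDecomposable {d : ℕ} (Λ : Mat d → Mat d) : Prop :=
  ∃ (n : ℕ) (V : Fin n → Mat d), (∀ i, (V i).rank ≤ 2) ∧
    ∀ X : Mat d, Λ X = ∑ i, V i * Xᵀ * (V i)ᴴ

/-- The diagonal part of a matrix (off-diagonal entries set to zero). -/
def diagPart {d : ℕ} (X : Mat d) : Mat d := Matrix.diagonal fun i => X i i


/-! ### Auxiliary lemmas -/

private lemma lam_entry {d : ℕ} (Λ : Mat d →ₗ[ℂ] Mat d) (X : Mat d) (m n : Fin d) :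
    Λ X m n = ∑ a, ∑ b, X a b * Λ (Matrix.single a b 1) m n := by
  have hX : X = ∑ a : Fin d, ∑ b : Fin d, X a b • Matrix.single a b (1 : ℂ) := by
    conv_lhs => rw [Matrix.matrix_eq_sum_single X]
    refine Finset.sum_congr rfl fun a _ => Finset.sum_congr rfl fun b _ => ?_
    rw [Matrix.smul_single, smul_eq_mul, mul_one]
  conv_lhs => rw [hX]
  rw [map_sum]
  rw [Matrix.sum_apply]
  refine Finset.sum_congr rfl fun a _ => ?_
  rw [map_sum, Matrix.sum_apply]
  refine Finset.sum_congr rfl fun b _ => ?_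
  rw [_root_.map_smul]
  simp [smul_eq_mul]

private lemma psd_vecMulVec {n : Type*} [Fintype n] (w : n → ℂ) :
    (Matrix.vecMulVec w (star w)).PosSemidef := by
  refine Matrix.PosSemidef.of_dotProduct_mulVec_nonneg ?_ ?_
  · ext p q
    simp [Matrix.vecMulVec_apply, Matrix.conjTranspose_apply, mul_comm]
  · intro x
    have h : star x ⬝ᵥ (Matrix.vecMulVec w (star w)).mulVec x
        = (star x ⬝ᵥ w) * star (star x ⬝ᵥ w) := by
      have hstar : star (star x ⬝ᵥ w) = ∑ q, star (w q) * x q := by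
        simp [dotProduct, star_sum, star_mul', mul_comm]
      rw [hstar]
      simp only [dotProduct, Matrix.mulVec, Matrix.vecMulVec_apply, Pi.star_apply,
        Finset.sum_mul, Finset.mul_sum]
      conv_lhs => rw [Finset.sum_comm]
      refine Finset.sum_congr rfl fun p _ => Finset.sum_congr rfl fun q _ => ?_
      ring
    rw [h]
    exact mul_star_self_nonneg _

private lemma reorder6 {α₁ α₂ α₃ α₄ α₅ α₆ : Type*} [Fintype α₁] [Fintype α₂] [Fintype α₃]
    [Fintype α₄] [Fintype α₅] [Fintype α₆] (F : α₁ → α₂ → α₃ → α₄ → α₅ → α₆ → ℂ) :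
    (∑ a, ∑ b, ∑ c, ∑ d, ∑ e, ∑ f, F a b c d e f)
      = ∑ c, ∑ b, ∑ f, ∑ e, ∑ a, ∑ d, F a b c d e f := by
  have h1 : ∑ x : α₁ × α₂ × α₃ × α₄ × α₅ × α₆,
      F x.1 x.2.1 x.2.2.1 x.2.2.2.1 x.2.2.2.2.1 x.2.2.2.2.2
      = ∑ a, ∑ b, ∑ c, ∑ d, ∑ e, ∑ f, F a b c d e f := by
    simp only [Fintype.sum_prod_type]
  have h2 : ∑ y : α₃ × α₂ × α₆ × α₅ × α₁ × α₄,
      F y.2.2.2.2.1 y.2.1 y.1 y.2.2.2.2.2 y.2.2.2.1 y.2.2.1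
      = ∑ c, ∑ b, ∑ f, ∑ e, ∑ a, ∑ d, F a b c d e f := by
    simp only [Fintype.sum_prod_type]
  rw [← h1, ← h2]
  exact Fintype.sum_equiv
    ⟨fun x => (x.2.2.1, x.2.1, x.2.2.2.2.2, x.2.2.2.2.1, x.1, x.2.2.2.1),
     fun y => (y.2.2.2.2.1, y.2.1, y.1, y.2.2.2.2.2, y.2.2.2.1, y.2.2.1),
     fun x => rfl, fun y => rfl⟩ _ _ (fun x => rfl)

private lemma central {d k : ℕ} (Λ : Mat d →ₗ[ℂ] Mat d) (w u : Fin k × Fin d → ℂ) :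
    (star (fun p : Fin d × Fin d => ∑ r : Fin k, star (w (r, p.1)) * u (r, p.2)) ⬝ᵥ
      (idTensor (⇑Λ) (Pplus d)).mulVec
        (fun p : Fin d × Fin d => ∑ r : Fin k, star (w (r, p.1)) * u (r, p.2)))
      = (1 / (d : ℂ)) *
        (star u ⬝ᵥ (idTensorK k (⇑Λ) (Matrix.vecMulVec w (star w))).mulVec u) := by
  classical
  set T : Fin d → Fin d → Fin d → Fin d → ℂ :=
    fun a b m n => Λ (Matrix.single a b 1) m n with hT
  set φ : Fin d × Fin d → ℂ :=
    fun p => ∑ r : Fin k, star (w (r, p.1)) * u (r, p.2) with hφ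
  have hChoi : ∀ p q : Fin d × Fin d,
      idTensor (⇑Λ) (Pplus d) p q = (1 / (d : ℂ)) * T p.1 q.1 p.2 q.2 := by
    intro p q
    show Λ (Matrix.of fun m n => Pplus d (p.1, m) (q.1, n)) p.2 q.2 = _
    have hblk : (Matrix.of fun m n => Pplus d (p.1, m) (q.1, n))
        = (1 / (d : ℂ)) • Matrix.single p.1 q.1 1 := by
      ext m n
      simp only [Matrix.of_apply, Pplus, Matrix.smul_apply, Matrix.single,
        Matrix.of_apply, smul_eq_mul]
      by_cases h1 : p.1 = m <;> by_cases h2 : q.1 = n <;> simp [h1, h2]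
    rw [hblk, _root_.map_smul]
    simp [hT, smul_eq_mul]
  have hK : ∀ p q : Fin k × Fin d,
      idTensorK k (⇑Λ) (Matrix.vecMulVec w (star w)) p q
        = ∑ a, ∑ b, (w (p.1, a) * star (w (q.1, b))) * T a b p.2 q.2 := by
    intro p q
    show Λ (Matrix.of fun m n => Matrix.vecMulVec w (star w) (p.1, m) (q.1, n)) p.2 q.2 = _
    rw [lam_entry]
    refine Finset.sum_congr rfl fun a _ => Finset.sum_congr rfl fun b _ => ?_
    simp [Matrix.vecMulVec_apply, hT]
  have hφc : ∀ p : Fin d × Fin d,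
      star (φ p) = ∑ r : Fin k, w (r, p.1) * star (u (r, p.2)) := by
    intro p
    simp [hφ, star_sum, star_mul', star_star, mul_comm]
  have hL : (star φ ⬝ᵥ (idTensor (⇑Λ) (Pplus d)).mulVec φ)
      = ∑ p : Fin d × Fin d, ∑ r : Fin k, ∑ q : Fin d × Fin d, ∑ s : Fin k,
          (w (r, p.1) * star (u (r, p.2))) *
            (((1 / (d : ℂ)) * T p.1 q.1 p.2 q.2) * (star (w (s, q.1)) * u (s, q.2))) := by
    refine Finset.sum_congr rfl fun p _ => ?_
    rw [Pi.star_apply, hφc p, Finset.sum_mul]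
    refine Finset.sum_congr rfl fun r _ => ?_
    rw [Matrix.mulVec, dotProduct, Finset.mul_sum]
    refine Finset.sum_congr rfl fun q _ => ?_
    rw [hChoi p q]
    have hq : ((1 / (d : ℂ)) * T p.1 q.1 p.2 q.2) * φ q
        = ∑ s : Fin k, ((1 / (d : ℂ)) * T p.1 q.1 p.2 q.2) *
            (star (w (s, q.1)) * u (s, q.2)) := by
      rw [hφ, Finset.mul_sum]
    rw [hq, Finset.mul_sum]
  have hR : (star u ⬝ᵥ (idTensorK k (⇑Λ) (Matrix.vecMulVec w (star w))).mulVec u)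
      = ∑ p : Fin k × Fin d, ∑ q : Fin k × Fin d, ∑ a : Fin d, ∑ b : Fin d,
          star (u p) * (((w (p.1, a) * star (w (q.1, b))) * T a b p.2 q.2) * u q) := by
    refine Finset.sum_congr rfl fun p _ => ?_
    rw [Pi.star_apply, Matrix.mulVec, dotProduct, Finset.mul_sum]
    refine Finset.sum_congr rfl fun q _ => ?_
    rw [hK p q, Finset.sum_mul, Finset.mul_sum]
    refine Finset.sum_congr rfl fun a _ => ?_
    rw [Finset.sum_mul, Finset.mul_sum]
  rw [hL, hR]
  simp only [Finset.mul_sum]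
  simp only [Fintype.sum_prod_type]
  rw [reorder6 (fun (i m : Fin d) (r : Fin k) (j n : Fin d) (s : Fin k) =>
    w (r, i) * star (u (r, m)) * (1 / (d : ℂ) * T i j m n * (star (w (s, j)) * u (s, n))))]
  refine Finset.sum_congr rfl fun r _ => Finset.sum_congr rfl fun m _ =>
    Finset.sum_congr rfl fun s _ => Finset.sum_congr rfl fun n _ =>
    Finset.sum_congr rfl fun i _ => Finset.sum_congr rfl fun j _ => ?_
  ring

private lemma rank_factor {d k : ℕ} (A : Mat d) (h : A.rank ≤ k) :
    ∃ (B : Matrix (Fin d) (Fin k) ℂ) (C : Matrix (Fin k) (Fin d) ℂ), A = B * C := by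
  classical
  set W : Submodule ℂ (Fin d → ℂ) := Submodule.span ℂ (Set.range Aᵀ) with hW
  have hcol : ∀ j, Aᵀ j ∈ W := fun j => Submodule.subset_span ⟨j, rfl⟩
  have hrk : Module.finrank ℂ W ≤ k := by
    rw [Matrix.rank_eq_finrank_span_cols] at h; exact h
  set n0 := Module.finrank ℂ W with hn0
  let b : Module.Basis (Fin n0) ℂ W := Module.finBasis ℂ W
  set B : Matrix (Fin d) (Fin k) ℂ :=
    Matrix.of (fun (i : Fin d) (r : Fin k) =>
      if h' : (r : ℕ) < n0 then ((b ⟨(r : ℕ), h'⟩ : Fin d → ℂ) i) else 0) with hB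
  set C : Matrix (Fin k) (Fin d) ℂ :=
    Matrix.of (fun (r : Fin k) (j : Fin d) =>
      if h' : (r : ℕ) < n0 then b.repr ⟨Aᵀ j, hcol j⟩ ⟨(r : ℕ), h'⟩ else 0) with hC
  refine ⟨B, C, ?_⟩
  ext i j
  symm
  rw [Matrix.mul_apply]
  set g : ℕ → ℂ := fun t =>
    if h' : t < n0 then b.repr ⟨Aᵀ j, hcol j⟩ ⟨t, h'⟩ * ((b ⟨t, h'⟩ : Fin d → ℂ) i) else 0
    with hg
  have hterm : ∀ r : Fin k, B i r * C r j = g (r : ℕ) := by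
    intro r
    simp only [hB, hC, hg, Matrix.of_apply]
    split_ifs with h' <;> simp [mul_comm]
  rw [Finset.sum_congr rfl fun r _ => hterm r]
  rw [Fin.sum_univ_eq_sum_range]
  rw [show Finset.range k = Finset.range n0 ∪ (Finset.range k \ Finset.range n0) from by
    rw [Finset.union_sdiff_of_subset (Finset.range_subset_range.mpr hrk)]]
  rw [Finset.sum_union Finset.disjoint_sdiff]
  have hzero : ∑ t ∈ Finset.range k \ Finset.range n0, g t = 0 := by
    refine Finset.sum_eq_zero fun t ht => ?_
    rw [Finset.mem_sdiff, Finset.mem_range, Finset.mem_range] at ht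
    exact dif_neg ht.2
  rw [hzero, add_zero, ← Fin.sum_univ_eq_sum_range]
  have hval : ∀ t : Fin n0, g (t : ℕ) = b.repr ⟨Aᵀ j, hcol j⟩ t * ((b t : Fin d → ℂ) i) := by
    intro t
    simp [hg, t.isLt]
  rw [Finset.sum_congr rfl fun t _ => hval t]
  have hsum : ∑ t : Fin n0, b.repr ⟨Aᵀ j, hcol j⟩ t * ((b t : Fin d → ℂ) i)
      = ((∑ t : Fin n0, b.repr ⟨Aᵀ j, hcol j⟩ t • b t : W) : Fin d → ℂ) i := by
    push_cast [Submodule.coe_sum]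
    simp [Finset.sum_apply]
  rw [hsum, Module.Basis.sum_repr]
  rfl

private lemma herm_quad_real {n : Type*} [Fintype n] {P : Matrix n n ℂ} (hP : P.IsHermitian)
    (x : n → ℂ) : star x ⬝ᵥ P.mulVec x = (((star x ⬝ᵥ P.mulVec x).re : ℝ) : ℂ) := by
  have hPe : ∀ p q, star (P p q) = P q p := by
    intro p q
    conv_rhs => rw [← hP]
    simp [Matrix.conjTranspose_apply]
  refine (Complex.conj_eq_iff_re.mp ?_).symm
  have expand : star x ⬝ᵥ P.mulVec x = ∑ p, ∑ q, star (x p) * (P p q * x q) := by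
    simp only [dotProduct, Matrix.mulVec, Pi.star_apply, Finset.mul_sum]
  rw [expand, map_sum]
  simp only [map_sum]
  rw [Finset.sum_comm]
  refine Finset.sum_congr rfl fun p _ => Finset.sum_congr rfl fun q _ => ?_
  simp only [_root_.map_mul, ← Complex.star_def, star_star, hPe]
  ring

private lemma idTensorK_sum {d k : ℕ} {ι : Type*} (s : Finset ι) (Λ : Mat d →ₗ[ℂ] Mat d)
    (M : ι → Matrix (Fin k × Fin d) (Fin k × Fin d) ℂ) :
    idTensorK k (⇑Λ) (∑ t ∈ s, M t) = ∑ t ∈ s, idTensorK k (⇑Λ) (M t) := by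
  ext p q
  simp only [idTensorK, Matrix.of_apply, Matrix.sum_apply]
  rw [show (Matrix.of fun m n => ∑ t ∈ s, M t (p.1, m) (q.1, n))
      = ∑ t ∈ s, (Matrix.of fun m n => M t (p.1, m) (q.1, n)) from by
    ext m n; simp [Matrix.sum_apply]]
  rw [map_sum, Matrix.sum_apply]

/-- Terhal–Horodecki: a Hermiticity-preserving linear map is
`k`-positive iff its Choi–Jamiołkowski operator is positive on all vectors of
Schmidt rank at most `k`. -/
theorem kPositive_iff_choi_positive_on_schmidt_rank (d : ℕ) (hd : 2 ≤ d)
    (k : ℕ) (hk1 : 1 ≤ k) (hkd : k ≤ d)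
    (Λ : Mat d →ₗ[ℂ] Mat d) (hherm : ∀ X : Mat d, Λ Xᴴ = (Λ X)ᴴ) :
    (∀ M : Matrix (Fin k × Fin d) (Fin k × Fin d) ℂ, M.PosSemidef →
        (idTensorK k (⇑Λ) M).PosSemidef) ↔
      ∀ φ : Fin d × Fin d → ℂ, schmidtRank φ ≤ k →
        0 ≤ (star φ ⬝ᵥ (idTensor (⇑Λ) (Pplus d)).mulVec φ).re := by
  constructor
  · -- k-positivity implies Choi positivity on Schmidt rank ≤ k vectors
    intro h φ hrank
    obtain ⟨B, C, hBC⟩ := rank_factor (Matrix.of fun i j => φ (i, j)) hrank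
    set w : Fin k × Fin d → ℂ := fun p => star (B p.2 p.1) with hw
    set u : Fin k × Fin d → ℂ := fun p => C p.1 p.2 with hu
    have hφeq : φ = fun p : Fin d × Fin d => ∑ r : Fin k, star (w (r, p.1)) * u (r, p.2) := by
      funext p
      have h0 : φ p = (Matrix.of fun i j => φ (i, j)) p.1 p.2 := by simp
      rw [h0, hBC, Matrix.mul_apply]
      simp [hw, hu, star_star]
    have hpsd := h (Matrix.vecMulVec w (star w)) (psd_vecMulVec w)
    have hq := hpsd.re_dotProduct_nonneg u
    have hc : (star φ ⬝ᵥ (idTensor (⇑Λ) (Pplus d)).mulVec φ)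
        = (1 / (d : ℂ)) *
          (star u ⬝ᵥ (idTensorK k (⇑Λ) (Matrix.vecMulVec w (star w))).mulVec u) := by
      conv_lhs => rw [hφeq]
      exact central Λ w u
    rw [hc]
    rw [show (1 / (d : ℂ)) = (((1 / (d : ℝ)) : ℝ) : ℂ) from by push_cast; ring]
    rw [Complex.re_ofReal_mul]
    have hd0 : (0:ℝ) ≤ 1 / (d : ℝ) := by positivity
    exact mul_nonneg hd0 hq
  · -- Choi positivity on Schmidt rank ≤ k vectors implies k-positivity
    intro h M hM
    have hNherm : (idTensorK k (⇑Λ) M).IsHermitian := by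
      ext p q
      show star (idTensorK k (⇑Λ) M q p) = idTensorK k (⇑Λ) M p q
      show star (Λ (Matrix.of fun m n => M (q.1, m) (p.1, n)) q.2 p.2)
        = Λ (Matrix.of fun m n => M (p.1, m) (q.1, n)) p.2 q.2
      have hblk : (Matrix.of fun m n => M (q.1, m) (p.1, n))ᴴ
          = Matrix.of fun m n => M (p.1, m) (q.1, n) := by
        ext m n
        simp only [Matrix.conjTranspose_apply, Matrix.of_apply]
        conv_rhs => rw [← hM.1]
        simp [Matrix.conjTranspose_apply]
      calc star (Λ (Matrix.of fun m n => M (q.1, m) (p.1, n)) q.2 p.2)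
          = (Λ (Matrix.of fun m n => M (q.1, m) (p.1, n)))ᴴ p.2 q.2 := rfl
        _ = Λ ((Matrix.of fun m n => M (q.1, m) (p.1, n))ᴴ) p.2 q.2 := by rw [hherm]
        _ = Λ (Matrix.of fun m n => M (p.1, m) (q.1, n)) p.2 q.2 := by rw [hblk]
    refine Matrix.PosSemidef.of_dotProduct_mulVec_nonneg hNherm fun x => ?_
    open scoped MatrixOrder in set S := CFC.sqrt M with hS
    have hSh : Sᴴ = S := by open scoped MatrixOrder in exact (CFC.sqrt_nonneg M).posSemidef.1
    set ws : (Fin k × Fin d) → (Fin k × Fin d) → ℂ := fun t p => star (S t p) with hws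
    have hMdecomp : M = ∑ t : Fin k × Fin d,
        Matrix.vecMulVec (ws t) (star (ws t)) := by
      have hM2 : M = Sᴴ * S := by open scoped MatrixOrder in rw [hSh]; exact (CFC.sqrt_mul_sqrt_self M hM.nonneg).symm
      ext p q
      rw [hM2, Matrix.mul_apply, Matrix.sum_apply]
      refine Finset.sum_congr rfl fun t _ => ?_
      simp [Matrix.vecMulVec_apply, hws, star_star, Matrix.conjTranspose_apply]
    have hNsum : idTensorK k (⇑Λ) M
        = ∑ t : Fin k × Fin d, idTensorK k (⇑Λ) (Matrix.vecMulVec (ws t) (star (ws t))) := by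
      conv_lhs => rw [hMdecomp]
      exact idTensorK_sum _ Λ _
    have hterm : ∀ t : Fin k × Fin d,
        0 ≤ (star x ⬝ᵥ (idTensorK k (⇑Λ)
          (Matrix.vecMulVec (ws t) (star (ws t)))).mulVec x).re := by
      intro t
      set φt : Fin d × Fin d → ℂ :=
        fun p => ∑ r : Fin k, star (ws t (r, p.1)) * x (r, p.2) with hφt
      have hrank : schmidtRank φt ≤ k := by
        have hfact : (Matrix.of fun i j => φt (i, j) : Mat d)
            = (Matrix.of fun (i : Fin d) (r : Fin k) => star (ws t (r, i))) *
              (Matrix.of fun (r : Fin k) (m : Fin d) => x (r, m)) := by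
          ext i m
          rw [Matrix.mul_apply]
          simp [hφt]
        rw [schmidtRank, hfact]
        calc ((Matrix.of fun (i : Fin d) (r : Fin k) => star (ws t (r, i))) *
              (Matrix.of fun (r : Fin k) (m : Fin d) => x (r, m))).rank
            ≤ (Matrix.of fun (i : Fin d) (r : Fin k) => star (ws t (r, i))).rank :=
              Matrix.rank_mul_le_left _ _
          _ ≤ Fintype.card (Fin k) := Matrix.rank_le_card_width _
          _ = k := Fintype.card_fin k
      have hcen := central Λ (ws t) x
      have hre := h φt hrank
      have hφteq : (star φt ⬝ᵥ (idTensor (⇑Λ) (Pplus d)).mulVec φt)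
          = (1 / (d : ℂ)) * (star x ⬝ᵥ (idTensorK k (⇑Λ)
              (Matrix.vecMulVec (ws t) (star (ws t)))).mulVec x) := hcen
      have := hre
      rw [hφteq] at this
      rw [show (1 / (d : ℂ)) = (((1 / (d : ℝ)) : ℝ) : ℂ) from by push_cast; ring] at this
      rw [Complex.re_ofReal_mul] at this
      have hdpos : (0:ℝ) < 1 / (d : ℝ) := by
        have : (0:ℝ) < (d : ℝ) := by exact_mod_cast lt_of_lt_of_le (by norm_num) hd
        positivity
      exact nonneg_of_mul_nonneg_right this hdpos
    set NT : (Fin k × Fin d) → Matrix (Fin k × Fin d) (Fin k × Fin d) ℂ :=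
      fun t => idTensorK k (⇑Λ) (Matrix.vecMulVec (ws t) (star (ws t))) with hNT
    have h1 : ∀ p, ((∑ t : Fin k × Fin d, NT t) *ᵥ x) p
        = ∑ t : Fin k × Fin d, ((NT t) *ᵥ x) p := by
      intro p
      show (∑ q, (∑ t : Fin k × Fin d, NT t) p q * x q) = _
      calc (∑ q, (∑ t : Fin k × Fin d, NT t) p q * x q)
          = ∑ q, ∑ t : Fin k × Fin d, NT t p q * x q := by
            refine Finset.sum_congr rfl fun q _ => ?_
            rw [Matrix.sum_apply, Finset.sum_mul]
        _ = ∑ t : Fin k × Fin d, ∑ q, NT t p q * x q := Finset.sum_comm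
        _ = ∑ t : Fin k × Fin d, ((NT t) *ᵥ x) p := rfl
    have hsplit : star x ⬝ᵥ (idTensorK k (⇑Λ) M) *ᵥ x
        = ∑ t : Fin k × Fin d, star x ⬝ᵥ (NT t) *ᵥ x := by
      rw [hNsum]
      calc star x ⬝ᵥ (∑ t : Fin k × Fin d, NT t) *ᵥ x
          = ∑ p, star (x p) * ((∑ t : Fin k × Fin d, NT t) *ᵥ x) p := rfl
        _ = ∑ p, star (x p) * ∑ t : Fin k × Fin d, ((NT t) *ᵥ x) p := by
            refine Finset.sum_congr rfl fun p _ => ?_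
            rw [h1 p]
        _ = ∑ p, ∑ t : Fin k × Fin d, star (x p) * ((NT t) *ᵥ x) p := by
            refine Finset.sum_congr rfl fun p _ => ?_
            rw [Finset.mul_sum]
        _ = ∑ t : Fin k × Fin d, ∑ p, star (x p) * ((NT t) *ᵥ x) p := Finset.sum_comm
        _ = ∑ t : Fin k × Fin d, star x ⬝ᵥ (NT t) *ᵥ x := rfl
    have hrez : 0 ≤ (star x ⬝ᵥ (idTensorK k (⇑Λ) M).mulVec x).re := by
      rw [hsplit, Complex.re_sum]
      exact Finset.sum_nonneg fun t _ => hterm t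
    have hzreal := herm_quad_real hNherm x
    rw [hzreal]
    exact_mod_cast hrez
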